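/- Let a > 0, let n be a positive integer, let t_1 < t_2 < ⋯ < t_n be real numbers, and let θ_1, …, θ_n be real. For 1 ≤ i ≤ j ≤ n define a_{ij} := E(t_j − t_i) − E(t_{j+1} − t_i) − E(t_j − t_{i−1}) + E(t_{j+1} − t_{i−1}), where E(s) := e^{−a s} for arguments built from indices in {1, …, n}, and where any term involving the index 0 or the index n+1 (i.e. involving t_0 or t_{n+1}) is set equal to 0 (corresponding to the conventions t_0 = −∞ and t_{n+1} = +∞). Then ∑_{1 ≤ i ≤ j ≤ n} (θ_i + ⋯ + θ_j)^2 · a_{ij} = ∑_{i=1}^n θ_i^2 + 2 ∑_{1 ≤ i < j ≤ n} θ_i θ_j e^{−a(t_j − t_i)}. Consequently the Ornstein–Uhlenbeck Gaussian characteristic exponent −(1/(4a)) ∑_{i=1}^n θ_i^2 − (1/(2a)) ∑_{1 ≤ i < j ≤ n} θ_i θ_j e^{−a(t_j − t_i)} equals −(1/(4a)) ∑_{1 ≤ i ≤ j ≤ n} (θ_i + ⋯ + θ_j)^2 · a'_{ij}, where a'_{ij} := (1 − e^{−a(t_j − t_{i−1})}) − (1 − e^{−a(t_j − t_i)}) −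 (1 − e^{−a(t_{j+1} − t_{i−1})}) + (1 − e^{−a(t_{j+1} − t_i)}) with the same boundary conventions (terms 1 − e^{−a(·)} involving t_0 or t_{n+1} are set equal to 1). -/

import Mathlib

open Finset

lemma sum_if_Icc' (n p q : ℕ) (hp : 1 ≤ p) (hq : q ≤ n) (f : ℕ → ℝ) :
    ∑ x ∈ Icc 1 n, (if p ≤ x ∧ x ≤ q then f x else 0) = ∑ x ∈ Icc p q, f x := by
  rw [Finset.sum_ite, Finset.sum_const_zero, add_zero]
  apply Finset.sum_congr _ (fun _ _ => rfl)
  ext x; simp only [Finset.mem_filter, Finset.mem_Icc]; omega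

lemma tel' (g : ℕ → ℝ) (M N : ℕ) (h : M ≤ N + 1) :
    ∑ j ∈ Icc M N, (g j - g (j + 1)) = g M - g (N + 1) := by
  rw [← Finset.Ico_add_one_right_eq_Icc, Finset.sum_Ico_eq_sum_range]
  have h2 : M + (N + 1 - M) = N + 1 := by omega
  have := Finset.sum_range_sub' (fun k => g (M + k)) (N + 1 - M)
  rw [h2] at this
  simpa [add_assoc] using this

lemma tel2' (f : ℕ → ℝ) (m : ℕ) :
    ∑ i ∈ Icc 1 m, (f i - f (i - 1)) = f m - f 0 := by
  rw [← Finset.Ico_add_one_right_eq_Icc, Finset.sum_Ico_eq_sum_range]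
  have := Finset.sum_range_sub f m
  rw [show m + 1 - 1 = m from rfl]
  rw [← this]
  exact Finset.sum_congr rfl fun k _ => by norm_num [Nat.add_comm 1 k]


/-- The Ornstein--Uhlenbeck covariance quadratic form identity.
Boundary conventions: terms `e^{-a(·)}` involving `t 0` or `t (n+1)` are set to `0`
(in `A`), and terms `1 - e^{-a(·)}` involving them are set to `1` (in `A'`). -/
theorem OU_characteristic_exponent_rewriting
    (a : ℝ) (ha : 0 < a) (n : ℕ) (hn : 0 < n) (t : ℕ → ℝ)
    (ht : ∀ i, 1 ≤ i → i < n → t i < t (i + 1)) (θ : ℕ → ℝ)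
    (A A' : ℕ → ℕ → ℝ)
    (hA : ∀ i j, 1 ≤ i → i ≤ j → j ≤ n →
      A i j = Real.exp (-a * (t j - t i))
        - (if j = n then 0 else Real.exp (-a * (t (j + 1) - t i)))
        - (if i = 1 then 0 else Real.exp (-a * (t j - t (i - 1))))
        + (if i = 1 ∨ j = n then 0 else Real.exp (-a * (t (j + 1) - t (i - 1)))))
    (hA' : ∀ i j, 1 ≤ i → i ≤ j → j ≤ n →
      A' i j = (if i = 1 then 1 else 1 - Real.exp (-a * (t j - t (i - 1))))
        - (1 - Real.exp (-a * (t j - t i)))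
        - (if i = 1 ∨ j = n then 1 else 1 - Real.exp (-a * (t (j + 1) - t (i - 1))))
        + (if j = n then 1 else 1 - Real.exp (-a * (t (j + 1) - t i)))) :
    (∑ i ∈ Icc 1 n, ∑ j ∈ Icc i n, (∑ m ∈ Icc i j, θ m) ^ 2 * A i j
        = ∑ i ∈ Icc 1 n, θ i ^ 2
          + 2 * ∑ i ∈ Icc 1 n, ∑ j ∈ Icc (i + 1) n,
              θ i * θ j * Real.exp (-a * (t j - t i)))
    ∧ (-(1 / (4 * a)) * ∑ i ∈ Icc 1 n, θ i ^ 2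
          - (1 / (2 * a)) * ∑ i ∈ Icc 1 n, ∑ j ∈ Icc (i + 1) n,
              θ i * θ j * Real.exp (-a * (t j - t i))
        = -(1 / (4 * a)) * ∑ i ∈ Icc 1 n, ∑ j ∈ Icc i n,
            (∑ m ∈ Icc i j, θ m) ^ 2 * A' i j) := by
  -- B with boundary zeros
  set B : ℕ → ℕ → ℝ := fun i j => if 1 ≤ i ∧ j ≤ n then Real.exp (-a * (t j - t i)) else 0
    with hB
  have hAB : ∀ i j, 1 ≤ i → i ≤ j → j ≤ n →
      A i j = B i j - B i (j + 1) - B (i - 1) j + B (i - 1) (j + 1) := by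
    intro i j h1 h2 h3
    have e1 : B i j = Real.exp (-a * (t j - t i)) := by
      simp only [hB]; exact if_pos ⟨h1, h3⟩
    have e2 : B i (j + 1) = if j = n then 0 else Real.exp (-a * (t (j + 1) - t i)) := by
      simp only [hB]
      by_cases hj : j = n
      · rw [if_pos hj]; exact if_neg (by omega)
      · rw [if_neg hj]; exact if_pos ⟨h1, by omega⟩
    have e3 : B (i - 1) j = if i = 1 then 0 else Real.exp (-a * (t j - t (i - 1))) := by
      simp only [hB]
      by_cases hi : i = 1
      · rw [if_pos hi]; exact if_neg (by omega)
      · rw [if_neg hi]; exact if_pos ⟨by omega, h3⟩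
    have e4 : B (i - 1) (j + 1) =
        if i = 1 ∨ j = n then 0 else Real.exp (-a * (t (j + 1) - t (i - 1))) := by
      simp only [hB]
      by_cases hij : i = 1 ∨ j = n
      · rw [if_pos hij]; exact if_neg (by omega)
      · rw [if_neg hij]; exact if_pos ⟨by omega, by omega⟩
    rw [hA i j h1 h2 h3, e1, e2, e3, e4]
  -- key telescoping identity
  have key : ∀ k ∈ Icc 1 n, ∀ l ∈ Icc 1 n,
      (∑ i ∈ Icc 1 n, ∑ j ∈ Icc 1 n,
        if i ≤ k ∧ i ≤ l ∧ k ≤ j ∧ l ≤ j then A i j else 0)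
      = Real.exp (-a * (t (max k l) - t (min k l))) := by
    intro k hk l hl
    simp only [Finset.mem_Icc] at hk hl
    have step1 : ∀ i ∈ Icc 1 n,
        (∑ j ∈ Icc 1 n, if i ≤ k ∧ i ≤ l ∧ k ≤ j ∧ l ≤ j then A i j else 0)
        = if 1 ≤ i ∧ i ≤ min k l then (B i (max k l) - B (i-1) (max k l)) else 0 := by
      intro i hi
      simp only [Finset.mem_Icc] at hi
      by_cases him : i ≤ min k l
      · rw [if_pos ⟨hi.1, him⟩]
        have conv1 : (∑ j ∈ Icc 1 n, if i ≤ k ∧ i ≤ l ∧ k ≤ j ∧ l ≤ j then A i j else 0)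
            = ∑ j ∈ Icc (max k l) n,
                ((B i j - B (i-1) j) - (B i (j+1) - B (i-1) (j+1))) := by
          rw [← sum_if_Icc' n (max k l) n (by omega) le_rfl
            (fun j => (B i j - B (i-1) j) - (B i (j+1) - B (i-1) (j+1)))]
          apply Finset.sum_congr rfl
          intro j hj
          simp only [Finset.mem_Icc] at hj
          by_cases hc : max k l ≤ j
          · rw [if_pos (by omega), if_pos ⟨hc, hj.2⟩]
            rw [hAB i j hi.1 (by omega) hj.2]; ring
          · rw [if_neg (by omega), if_neg (by omega)]
        rw [conv1, tel' (fun j => B i j - B (i-1) j) (max k l) n (by omega)]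
        have : B i (n+1) = 0 := by simp [hB]
        have h2 : B (i-1) (n+1) = 0 := by simp [hB]
        simp only [this, h2]; ring
      · rw [if_neg (by omega)]
        apply Finset.sum_eq_zero
        intro j _
        rw [if_neg (by omega)]
    rw [Finset.sum_congr rfl step1,
      sum_if_Icc' n 1 (min k l) le_rfl (by omega) (fun i => B i (max k l) - B (i-1) (max k l)),
      tel2' (fun i => B i (max k l)) (min k l)]
    have h0 : B 0 (max k l) = 0 := by simp [hB]
    have h1 : B (min k l) (max k l) = Real.exp (-a * (t (max k l) - t (min k l))) := by
      simp only [hB]; rw [if_pos ⟨by omega, by omega⟩]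
    rw [h0, h1]; ring

  -- reindexing: expand the square and swap summation order
  have inner_eq : ∀ i j, 1 ≤ i → i ≤ j → j ≤ n →
      (∑ k ∈ Icc 1 n, ∑ l ∈ Icc 1 n,
        if i ≤ k ∧ i ≤ l ∧ k ≤ j ∧ l ≤ j then θ k * θ l * A i j else 0)
      = (∑ m ∈ Icc i j, θ m) ^ 2 * A i j := by
    intro i j h1 h2 h3
    have hk : ∀ k ∈ Icc 1 n,
        (∑ l ∈ Icc 1 n, if i ≤ k ∧ i ≤ l ∧ k ≤ j ∧ l ≤ j then θ k * θ l * A i j else 0)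
        = if i ≤ k ∧ k ≤ j then (∑ l ∈ Icc i j, θ k * θ l * A i j) else 0 := by
      intro k _
      by_cases hc : i ≤ k ∧ k ≤ j
      · rw [if_pos hc, ← sum_if_Icc' n i j h1 h3 (fun l => θ k * θ l * A i j)]
        refine Finset.sum_congr rfl fun l _ => ?_
        by_cases hl : i ≤ l ∧ l ≤ j
        · rw [if_pos ⟨hc.1, hl.1, hc.2, hl.2⟩, if_pos hl]
        · rw [if_neg (by tauto), if_neg hl]
      · rw [if_neg hc]; exact Finset.sum_eq_zero fun l _ => if_neg (by tauto)
    rw [Finset.sum_congr rfl hk, sum_if_Icc' n i j h1 h3, sq, Finset.sum_mul_sum,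
      Finset.sum_mul]
    exact Finset.sum_congr rfl fun k _ => by rw [Finset.sum_mul]
  have part1 : ∑ i ∈ Icc 1 n, ∑ j ∈ Icc i n, (∑ m ∈ Icc i j, θ m) ^ 2 * A i j
      = ∑ k ∈ Icc 1 n, ∑ l ∈ Icc 1 n,
          θ k * θ l * Real.exp (-a * (t (max k l) - t (min k l))) := by
    calc
      ∑ i ∈ Icc 1 n, ∑ j ∈ Icc i n, (∑ m ∈ Icc i j, θ m) ^ 2 * A i j
        = ∑ i ∈ Icc 1 n, ∑ j ∈ Icc 1 n, ∑ k ∈ Icc 1 n, ∑ l ∈ Icc 1 n,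
            (if i ≤ k ∧ i ≤ l ∧ k ≤ j ∧ l ≤ j then θ k * θ l * A i j else 0) := by
          refine Finset.sum_congr rfl fun i hi => ?_
          simp only [Finset.mem_Icc] at hi
          have hperj : ∀ j ∈ Icc 1 n,
              (∑ k ∈ Icc 1 n, ∑ l ∈ Icc 1 n,
                if i ≤ k ∧ i ≤ l ∧ k ≤ j ∧ l ≤ j then θ k * θ l * A i j else 0)
              = if i ≤ j ∧ j ≤ n then ((∑ m ∈ Icc i j, θ m) ^ 2 * A i j) else 0 := by
            intro j hj
            simp only [Finset.mem_Icc] at hj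
            by_cases hij : i ≤ j
            · rw [if_pos ⟨hij, hj.2⟩, inner_eq i j hi.1 hij hj.2]
            · rw [if_neg (by omega)]
              exact Finset.sum_eq_zero fun k _ =>
                Finset.sum_eq_zero fun l _ => if_neg (by omega)
          exact ((Finset.sum_congr rfl hperj).trans
            (sum_if_Icc' n i n hi.1 le_rfl (fun j => (∑ m ∈ Icc i j, θ m) ^ 2 * A i j))).symm
      _ = ∑ k ∈ Icc 1 n, ∑ l ∈ Icc 1 n, ∑ i ∈ Icc 1 n, ∑ j ∈ Icc 1 n,
            (if i ≤ k ∧ i ≤ l ∧ k ≤ j ∧ l ≤ j then θ k * θ l * A i j else 0) := by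
          exact (Finset.sum_congr rfl fun i _ => Finset.sum_comm).trans
            (Finset.sum_comm.trans (Finset.sum_congr rfl fun k _ =>
              (Finset.sum_congr rfl fun i _ => Finset.sum_comm).trans Finset.sum_comm))
      _ = ∑ k ∈ Icc 1 n, ∑ l ∈ Icc 1 n, θ k * θ l *
            (∑ i ∈ Icc 1 n, ∑ j ∈ Icc 1 n,
              if i ≤ k ∧ i ≤ l ∧ k ≤ j ∧ l ≤ j then A i j else 0) := by
          simp only [Finset.mul_sum, mul_ite, mul_zero]
      _ = ∑ k ∈ Icc 1 n, ∑ l ∈ Icc 1 n,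
            θ k * θ l * Real.exp (-a * (t (max k l) - t (min k l))) :=
          Finset.sum_congr rfl fun k hk => Finset.sum_congr rfl fun l hl => by
            rw [key k hk l hl]
  -- symmetric split of the square sum
  set F : ℕ → ℕ → ℝ :=
    fun k l => θ k * θ l * Real.exp (-a * (t (max k l) - t (min k l))) with hF
  have Fsym : ∀ k l, F k l = F l k := by
    intro k l; simp only [hF]; rw [mul_comm (θ k), max_comm, min_comm]
  have Fdiag : ∀ k, F k k = θ k ^ 2 := by
    intro k; simp [hF, sq]
  have Fupper : ∀ k l, k < l → F k l = θ k * θ l * Real.exp (-a * (t l - t k)) := by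
    intro k l hkl; simp only [hF]
    rw [max_eq_right (by omega), min_eq_left (by omega)]
  have hL : (∑ k ∈ Icc 1 n, ∑ l ∈ Icc 1 (k - 1), F k l)
      = ∑ k ∈ Icc 1 n, ∑ l ∈ Icc (k + 1) n, F k l := by
    have e1 : (∑ k ∈ Icc 1 n, ∑ l ∈ Icc 1 (k - 1), F k l)
        = ∑ k ∈ Icc 1 n, ∑ l ∈ Icc 1 n, (if 1 ≤ l ∧ l ≤ k - 1 then F k l else 0) := by
      refine Finset.sum_congr rfl fun k hk => ?_
      simp only [Finset.mem_Icc] at hk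
      exact (sum_if_Icc' n 1 (k - 1) le_rfl (by omega) (F k)).symm
    rw [e1, Finset.sum_comm]
    refine Finset.sum_congr rfl fun l hl => ?_
    simp only [Finset.mem_Icc] at hl
    have e2 : (∑ k ∈ Icc 1 n, if 1 ≤ l ∧ l ≤ k - 1 then F k l else 0)
        = ∑ k ∈ Icc 1 n, (if l + 1 ≤ k ∧ k ≤ n then F l k else 0) := by
      refine Finset.sum_congr rfl fun k hk => ?_
      simp only [Finset.mem_Icc] at hk
      rw [Fsym]
      split_ifs <;> first | rfl | omega
    rw [e2, sum_if_Icc' n (l + 1) n (by omega) le_rfl (F l)]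
  have split3 : ∀ k ∈ Icc 1 n, (∑ l ∈ Icc 1 n, F k l)
      = (∑ l ∈ Icc 1 (k - 1), F k l) + θ k ^ 2 + ∑ l ∈ Icc (k + 1) n, F k l := by
    intro k hk
    simp only [Finset.mem_Icc] at hk
    rw [← sum_if_Icc' n 1 (k - 1) le_rfl (by omega) (F k),
      ← sum_if_Icc' n (k + 1) n (by omega) le_rfl (F k)]
    have hd : θ k ^ 2 = ∑ l ∈ Icc 1 n, (if l = k then F k l else 0) := by
      rw [Finset.sum_ite_eq' (Icc 1 n) k (F k), if_pos (Finset.mem_Icc.2 ⟨hk.1, hk.2⟩), Fdiag]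
    rw [hd, ← Finset.sum_add_distrib, ← Finset.sum_add_distrib]
    refine Finset.sum_congr rfl fun l hl => ?_
    simp only [Finset.mem_Icc] at hl
    split_ifs <;> first | omega | (subst_vars; ring) | ring
  have split : (∑ k ∈ Icc 1 n, ∑ l ∈ Icc 1 n, F k l)
      = ∑ i ∈ Icc 1 n, θ i ^ 2
        + 2 * ∑ i ∈ Icc 1 n, ∑ j ∈ Icc (i + 1) n,
            θ i * θ j * Real.exp (-a * (t j - t i)) := by
    rw [Finset.sum_congr rfl split3, Finset.sum_add_distrib, Finset.sum_add_distrib, hL]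
    have eU : (∑ k ∈ Icc 1 n, ∑ l ∈ Icc (k + 1) n, F k l)
        = ∑ i ∈ Icc 1 n, ∑ j ∈ Icc (i + 1) n,
            θ i * θ j * Real.exp (-a * (t j - t i)) := by
      refine Finset.sum_congr rfl fun k _ => Finset.sum_congr rfl fun l hl => ?_
      simp only [Finset.mem_Icc] at hl
      exact Fupper k l (by omega)
    rw [eU]; ring
  have goal1 : ∑ i ∈ Icc 1 n, ∑ j ∈ Icc i n, (∑ m ∈ Icc i j, θ m) ^ 2 * A i j
      = ∑ i ∈ Icc 1 n, θ i ^ 2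
        + 2 * ∑ i ∈ Icc 1 n, ∑ j ∈ Icc (i + 1) n,
            θ i * θ j * Real.exp (-a * (t j - t i)) := part1.trans split
  refine ⟨goal1, ?_⟩
  have hAA' : (∑ i ∈ Icc 1 n, ∑ j ∈ Icc i n, (∑ m ∈ Icc i j, θ m) ^ 2 * A' i j)
      = ∑ i ∈ Icc 1 n, ∑ j ∈ Icc i n, (∑ m ∈ Icc i j, θ m) ^ 2 * A i j := by
    refine Finset.sum_congr rfl fun i hi => Finset.sum_congr rfl fun j hj => ?_
    simp only [Finset.mem_Icc] at hi hj
    have h1 : 1 ≤ i := hi.1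
    have h2 : i ≤ j := hj.1
    have h3 : j ≤ n := hj.2
    rw [hA' i j h1 h2 h3, hA i j h1 h2 h3]
    congr 1
    split_ifs <;> ring
  rw [hAA', goal1]
  have hane : a ≠ 0 := ne_of_gt ha
  field_simp
  ring
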